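/- For any n ≥ 0, the coefficients of q^0 through q^n of the formal power series F_{n+1}(q)/F_n(q) ∈ ℚ[[q]] are independent of n in the following sense: for all m ≥ n, the coefficient of q^k in F_{m+1}/F_m equals the coefficient of q^k in F_{n+1}/F_n for all 0 ≤ k ≤ n. -/

import Mathlib

open PowerSeries

noncomputable def qFibS : ℕ → PowerSeries ℚ
  | 0 => 1
  | 1 => 1
  | n + 2 => qFibS (n + 1) + PowerSeries.X * qFibS n

lemma qFibS_const : ∀ n, PowerSeries.constantCoeff (qFibS n) = 1
  | 0 => by simp [qFibS]
  | 1 => by simp [qFibS]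
  | n + 2 => by simp [qFibS, qFibS_const (n + 1), qFibS_const n]

lemma qFibS_det : ∀ n, qFibS (n + 2) * qFibS n - qFibS (n + 1) ^ 2
    = (-1 : PowerSeries ℚ) ^ n * PowerSeries.X ^ (n + 1)
  | 0 => by simp [qFibS]
  | n + 1 => by
    have h := qFibS_det n
    show (qFibS (n + 2) + PowerSeries.X * qFibS (n + 1)) * qFibS (n + 1) - _ = _
    rw [show qFibS (n + 2) = qFibS (n + 1) + PowerSeries.X * qFibS n from rfl] at h ⊢
    linear_combination (-(PowerSeries.X : PowerSeries ℚ)) * h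

lemma qFibS_step (m k : ℕ) (hk : k ≤ m) :
    PowerSeries.coeff k (qFibS (m + 2) * (qFibS (m + 1))⁻¹) =
      PowerSeries.coeff k (qFibS (m + 1) * (qFibS m)⁻¹) := by
  have hB : qFibS (m + 1) * (qFibS (m + 1))⁻¹ = 1 :=
    PowerSeries.mul_inv_cancel _ (by rw [qFibS_const]; norm_num)
  have hC : qFibS m * (qFibS m)⁻¹ = 1 :=
    PowerSeries.mul_inv_cancel _ (by rw [qFibS_const]; norm_num)
  have key : qFibS (m + 2) * (qFibS (m + 1))⁻¹ - qFibS (m + 1) * (qFibS m)⁻¹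
      = PowerSeries.X ^ (m + 1) *
        ((-1 : PowerSeries ℚ) ^ m * ((qFibS (m + 1))⁻¹ * (qFibS m)⁻¹)) := by
    have h := qFibS_det m
    linear_combination ((qFibS (m + 1))⁻¹ * (qFibS m)⁻¹) * h
      - (qFibS (m + 2) * (qFibS (m + 1))⁻¹) * hC
      + (qFibS (m + 1) * (qFibS m)⁻¹) * hB
  have hdvd : (PowerSeries.X : PowerSeries ℚ) ^ (m + 1) ∣
      (qFibS (m + 2) * (qFibS (m + 1))⁻¹ - qFibS (m + 1) * (qFibS m)⁻¹) := ⟨_, key⟩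
  have := (PowerSeries.X_pow_dvd_iff.mp hdvd) k (Nat.lt_succ_of_le hk)
  rw [map_sub] at this
  linarith

theorem qFib_ratio_coeff_stable (n m k : ℕ) (hnm : n ≤ m) (hk : k ≤ n) :
    PowerSeries.coeff k (qFibS (m + 1) * (qFibS m)⁻¹) =
      PowerSeries.coeff k (qFibS (n + 1) * (qFibS n)⁻¹) := by
  induction m, hnm using Nat.le_induction with
  | base => rfl
  | succ m hnm ih => rw [qFibS_step m k (hk.trans hnm), ih]
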